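/- Let p be a pattern of length n with coefficients a₁,…,aₙ and partial sums bᵢ = a₁+⋯+aᵢ, and let k ∈ ℕ. If p has admissibility degree at least k+1, then bᵢ ≥ min{i,k} for all i ∈ {1,…,n}. -/

import Mathlib

/-- A numerical semigroup: an additive submonoid of ℕ with finite complement. -/
def IsNumericalSemigroup (S : Set ℕ) : Prop :=
  0 ∈ S ∧ (∀ a ∈ S, ∀ b ∈ S, a + b ∈ S) ∧ Sᶜ.Finite

/-- Evaluation of a pattern (list of coefficients a₁,…,aₙ) at s₁,…,sₙ. -/
def patEval (p : List ℤ) (s : ℕ → ℕ) : ℤ :=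
  ∑ i ∈ Finset.range p.length, p.getD i 0 * (s i : ℤ)

/-- `S` admits the pattern `p`: p(s₁,…,sₙ) ∈ S for all s₁ ≥ ⋯ ≥ sₙ in S. -/
def AdmitsPat (S : Set ℕ) (p : List ℤ) : Prop :=
  ∀ s : ℕ → ℕ, (∀ i, s i ∈ S) → (∀ i j, i ≤ j → s j ≤ s i) →
    ∃ m ∈ S, (m : ℤ) = patEval p s

/-- A pattern is admissible if it is admitted by some numerical semigroup. -/
def Admissible (p : List ℤ) : Prop :=
  ∃ S : Set ℕ, IsNumericalSemigroup S ∧ AdmitsPat S p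

/-- The derivative p' of a pattern. -/
def pderiv : List ℤ → List ℤ
  | [] => []
  | a :: q => if a = 1 then q else (a - 1) :: q

/-- The admissibility degree: least k such that p⁽ᵏ⁾ is not admissible, or ∞. -/
noncomputable def adDeg (p : List ℤ) : ℕ∞ :=
  sInf ((fun m : ℕ => (m : ℕ∞)) '' {m : ℕ | ¬ Admissible (pderiv^[m] p)})

/-- The partial sum bᵢ = a₁ + ⋯ + aᵢ of the coefficients of `p`. -/
def psum (p : List ℤ) (i : ℕ) : ℤ :=
  ∑ j ∈ Finset.range i, p.getD j 0

lemma psum_cons (a : ℤ) (q : List ℤ) (i : ℕ) :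
    psum (a :: q) (i + 1) = a + psum q i := by
  unfold psum
  rw [Finset.sum_range_succ']
  simp [add_comm]

lemma admissible_psum_nonneg (p : List ℤ) (h : Admissible p) :
    ∀ i ≤ p.length, 0 ≤ psum p i := by
  intro i hi
  obtain ⟨S, ⟨h0, _, hfin⟩, hadm⟩ := h
  have hinf : S.Infinite := by
    have := hfin.infinite_compl
    simpa using this
  obtain ⟨t, ht, htpos⟩ := hinf.exists_gt 0
  set s : ℕ → ℕ := fun j => if j < i then t else 0 with hs
  have hmem : ∀ j, s j ∈ S := by
    intro j; by_cases hj : j < i <;> simp [hs, hj, ht, h0]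
  have hmono : ∀ j j', j ≤ j' → s j' ≤ s j := by
    intro j j' hjj
    by_cases hj' : j' < i
    · have : j < i := lt_of_le_of_lt hjj hj'
      simp [hs, hj', this]
    · simp [hs, hj']
  obtain ⟨m, _, hmeq⟩ := hadm s hmem hmono
  have heval : patEval p s = psum p i * t := by
    unfold patEval psum
    rw [Finset.sum_mul]
    refine (Finset.sum_subset (Finset.range_subset_range.mpr hi) ?_).symm.trans ?_
    · intro x _ hx
      have : ¬ x < i := by simpa using hx
      simp [hs, this]
    · refine Finset.sum_congr rfl ?_
      intro x hx
      have : x < i := Finset.mem_range.mp hx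
      simp [hs, this]
  have hnn : (0:ℤ) ≤ psum p i * t := by
    rw [← heval, ← hmeq]; exact_mod_cast Nat.zero_le m
  by_contra hneg
  push_neg at hneg
  have htpos' : (0:ℤ) < t := by exact_mod_cast htpos
  nlinarith

lemma key : ∀ (k : ℕ) (p : List ℤ), (∀ a ∈ p, a ≠ 0) →
    (∀ m ≤ k, Admissible (pderiv^[m] p)) →
    ∀ i, 1 ≤ i → i ≤ p.length → (min i k : ℤ) ≤ psum p i := by
  intro k
  induction k with
  | zero =>
    intro p _ H i _ h2
    have := admissible_psum_nonneg p (by simpa using H 0 le_rfl) i h2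
    simpa using this
  | succ k ih =>
    intro p hp H i h1 h2
    match p with
    | [] => simp at h2; omega
    | a :: q =>
      have hadm : Admissible (a :: q) := by simpa using H 0 (by omega)
      have ha0 : 0 ≤ a := by
        have := admissible_psum_nonneg _ hadm 1 (by simp)
        simpa [psum] using this
      have hane : a ≠ 0 := hp a (List.mem_cons_self (a := a) (l := q))
      by_cases hA : a = 1
      · have hd : pderiv (a :: q) = q := by simp [pderiv, hA]
        have H' : ∀ m ≤ k, Admissible (pderiv^[m] q) := by
          intro m hm
          rw [← hd, ← Function.iterate_succ_apply]
          exact H (m + 1) (by omega)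
        have hq : ∀ b ∈ q, b ≠ 0 := fun b hb => hp b (List.mem_cons_of_mem _ hb)
        subst hA
        match i, h1 with
        | 1, _ =>
          have : psum ((1:ℤ) :: q) 1 = 1 := by rw [psum_cons 1 q 0]; simp [psum]
          rw [this]
          simp
        | (j+2), _ =>
          have hij : j + 1 ≤ q.length := by simpa using h2
          have hIH := ih q hq H' (j+1) (by omega) hij
          rw [show j + 2 = (j + 1) + 1 from rfl, psum_cons]
          push_cast at hIH ⊢
          omega
      · have hd : pderiv (a :: q) = (a - 1) :: q := by simp [pderiv, hA]
        have H' : ∀ m ≤ k, Admissible (pderiv^[m] ((a - 1) :: q)) := by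
          intro m hm
          rw [← hd, ← Function.iterate_succ_apply]
          exact H (m + 1) (by omega)
        have hp' : ∀ b ∈ (a - 1) :: q, b ≠ 0 := by
          intro b hb
          rcases List.mem_cons.mp hb with rfl | hb
          · omega
          · exact hp b (List.mem_cons_of_mem _ hb)
        have hIH := ih ((a - 1) :: q) hp' H' i h1 (by simpa using h2)
        obtain ⟨j, rfl⟩ : ∃ j, i = j + 1 := ⟨i - 1, by omega⟩
        rw [psum_cons] at hIH ⊢
        push_cast at hIH ⊢
        omega

/-- If `p` has admissibility degree at least k+1, then bᵢ ≥ min{i,k}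
for all i ∈ {1,…,n}. -/
theorem stmt_1 (p : List ℤ) (hp : ∀ a ∈ p, a ≠ 0) (k : ℕ)
    (hdeg : (k : ℕ∞) + 1 ≤ adDeg p) :
    ∀ i : ℕ, 1 ≤ i → i ≤ p.length → (min i k : ℤ) ≤ psum p i := by
  have H : ∀ m ≤ k, Admissible (pderiv^[m] p) := by
    intro m hm
    by_contra hna
    have hmem : (m : ℕ∞) ∈ ((fun m : ℕ => (m : ℕ∞)) '' {m : ℕ | ¬ Admissible (pderiv^[m] p)}) :=
      ⟨m, hna, rfl⟩
    have h1 : adDeg p ≤ (m : ℕ∞) := sInf_le hmem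
    have h2 : (k : ℕ∞) + 1 ≤ (m : ℕ∞) := le_trans hdeg h1
    have h3 : ((k + 1 : ℕ) : ℕ∞) ≤ (m : ℕ∞) := by push_cast; exact h2
    have : k + 1 ≤ m := by exact_mod_cast h3
    omega
  exact key k p hp H
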